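/- Let m ≥ 1, n = m+1, h > 0, z_F > 0, M_α > 0, and let D ∈ ℝⁿ have entries D_1,…,D_n. Let S(D) and A(D) be the matrices defined below, and set G = (1/z_F)·S(D) − M_α·A(D). Then for every v ∈ ℝ^m, with the convention v₀ := 0: vᵀGv = Term₁ − Term₂, where Term₁ = (1/(2h·z_F))·(Σ_{i=2}^{m}(D_i + D_{i+1})(v_i − v_{i−1})² + (D_1 + D_2)v_1²) and Term₂ = (M_α/4)·(Σ_{i=1}^{m−1}(D_i − D_{i+2})v_i² + (D_m + D_{m+1})v_m²). -/

import Mathlib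

open Matrix Finset

/-- 1-based access to the entries of a finite vector, with value `0` at index `0`
and out of range. -/
def pad1 {n : ℕ} (v : Fin n → ℝ) : ℕ → ℝ :=
  fun k => if hk : k - 1 < n then (if k = 0 then 0 else v ⟨k - 1, hk⟩) else 0

/-- The symmetric tridiagonal stiffness matrix `S(D)` (1-based mathematical indexing). -/
noncomputable def matS (m : ℕ) (h : ℝ) (d : ℕ → ℝ) : Matrix (Fin m) (Fin m) ℝ :=
  Matrix.of fun i j =>
    if i = j then
      (if i.val + 1 = m then (d m + d (m + 1)) / (2 * h)
       else (d (i.val + 1) + 2 * d (i.val + 2) + d (i.val + 3)) / (2 * h))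
    else if i.val + 1 = j.val then -((d (i.val + 2) + d (i.val + 3)) / (2 * h))
    else if j.val + 1 = i.val then -((d (j.val + 2) + d (j.val + 3)) / (2 * h))
    else 0

/-- The tridiagonal matrix `A(D)` (1-based mathematical indexing). -/
noncomputable def matA (m : ℕ) (d : ℕ → ℝ) : Matrix (Fin m) (Fin m) ℝ :=
  Matrix.of fun i j =>
    if i = j then
      (if i.val + 1 = m then (d m + d (m + 1)) / 4
       else (d (i.val + 1) - d (i.val + 3)) / 4)
    else if i.val + 1 = j.val then (d (i.val + 2) + d (i.val + 3)) / 4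
    else if j.val + 1 = i.val then -((d (j.val + 2) + d (j.val + 3)) / 4)
    else 0

noncomputable def gS (m : ℕ) (h : ℝ) (d : ℕ → ℝ) : ℕ → ℕ → ℝ := fun i j =>
  if i = j then
    (if i + 1 = m then (d m + d (m + 1)) / (2 * h)
     else (d (i + 1) + 2 * d (i + 2) + d (i + 3)) / (2 * h))
  else if i + 1 = j then -((d (i + 2) + d (i + 3)) / (2 * h))
  else if j + 1 = i then -((d (j + 2) + d (j + 3)) / (2 * h))
  else 0

noncomputable def gA (m : ℕ) (d : ℕ → ℝ) : ℕ → ℕ → ℝ := fun i j =>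
  if i = j then
    (if i + 1 = m then (d m + d (m + 1)) / 4
     else (d (i + 1) - d (i + 3)) / 4)
  else if i + 1 = j then (d (i + 2) + d (i + 3)) / 4
  else if j + 1 = i then -((d (j + 2) + d (j + 3)) / 4)
  else 0

lemma pad1_succ {n : ℕ} (v : Fin n → ℝ) (i : ℕ) (hi : i < n) :
    pad1 v (i + 1) = v ⟨i, hi⟩ := by
  simp [pad1, hi]

lemma matS_entry (m : ℕ) (h : ℝ) (d : ℕ → ℝ) (i j : Fin m) :
    matS m h d i j = gS m h d i.val j.val := by
  simp [matS, gS, Fin.ext_iff]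

lemma matA_entry (m : ℕ) (d : ℕ → ℝ) (i j : Fin m) :
    matA m d i j = gA m d i.val j.val := by
  simp [matA, gA, Fin.ext_iff]

lemma tri_sum (m : ℕ) (F : ℕ → ℕ → ℝ) (hF : ∀ i j, (i + 2 ≤ j ∨ j + 2 ≤ i) → F i j = 0) :
    ∑ i ∈ range m, ∑ j ∈ range m, F i j =
      (∑ i ∈ range m, F i i) + (∑ i ∈ range (m-1), F i (i+1)) + (∑ i ∈ range (m-1), F (i+1) i) := by
  induction m with
  | zero => simp
  | succ m ih =>
    rcases Nat.eq_zero_or_pos m with hm | hm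
    · subst hm; simp
    have h1 : ∑ i ∈ range m, F i m = F (m-1) m := by
      apply Finset.sum_eq_single_of_mem (m-1) (Finset.mem_range.mpr (by omega))
      intro i hi hne
      exact hF i m (Or.inl (by rw [Finset.mem_range] at hi; omega))
    have h2 : ∑ j ∈ range m, F m j = F m (m-1) := by
      apply Finset.sum_eq_single_of_mem (m-1) (Finset.mem_range.mpr (by omega))
      intro j hj hne
      exact hF m j (Or.inr (by rw [Finset.mem_range] at hj; omega))
    have hmm : m - 1 + 1 = m := by omega
    rw [Finset.sum_range_succ]
    rw [Finset.sum_range_succ (fun j => F m j) m, h2]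
    have h3 : ∀ i ∈ range m, ∑ j ∈ range (m+1), F i j = (∑ j ∈ range m, F i j) + F i m :=
      fun i _ => Finset.sum_range_succ _ _
    rw [Finset.sum_congr rfl h3, Finset.sum_add_distrib, h1, ih]
    rw [Finset.sum_range_succ (fun i => F i i) m, Nat.succ_sub_one]
    conv_rhs => rw [← hmm, Finset.sum_range_succ (fun i => F i (i+1)) (m-1),
      Finset.sum_range_succ (fun i => F (i+1) i) (m-1), hmm]
    ring

lemma key1 (M : ℕ) (a b u : ℕ → ℝ) (hab : ∀ k, a k = b (k+1)) :
    (∑ k ∈ range M, a k * (u (k+1) - u k)^2) + b 0 * u 0 ^2 =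
      ((∑ i ∈ range M, (b i + a i) * (u i)^2) + b M * (u M)^2)
        - 2 * ∑ i ∈ range M, a i * u i * u (i+1) := by
  have h1 : ∑ i ∈ range (M+1), b i * u i ^ 2
      = (∑ k ∈ range M, b (k+1) * u (k+1)^2) + b 0 * u 0 ^2 :=
    Finset.sum_range_succ' _ M
  have h2 : ∑ i ∈ range (M+1), b i * u i ^2
      = (∑ i ∈ range M, b i * u i^2) + b M * u M ^2 :=
    Finset.sum_range_succ _ M
  have e1 : ∑ k ∈ range M, a k * (u (k+1) - u k)^2
      = (∑ k ∈ range M, b (k+1) * u (k+1)^2)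
        - (∑ k ∈ range M, 2 * (a k * u k * u (k+1)))
        + ∑ k ∈ range M, a k * u k ^2 := by
    rw [← Finset.sum_sub_distrib, ← Finset.sum_add_distrib]
    refine Finset.sum_congr rfl fun k _ => ?_
    linear_combination (u (k+1))^2 * hab k
  have e2 : ∑ i ∈ range M, (b i + a i) * (u i)^2
      = (∑ i ∈ range M, b i * u i ^2) + ∑ i ∈ range M, a i * u i ^2 := by
    rw [← Finset.sum_add_distrib]
    exact Finset.sum_congr rfl fun k _ => by ring
  rw [e1, e2, Finset.mul_sum]
  linarith [h1, h2]

lemma lemS (M : ℕ) (h : ℝ) (d : ℕ → ℝ) (v : Fin (M+1) → ℝ) :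
    v ⬝ᵥ (matS (M+1) h d).mulVec v =
      (1/(2*h)) * ((∑ i ∈ Icc 2 (M+1), (d i + d (i+1)) * (pad1 v i - pad1 v (i-1))^2)
        + (d 1 + d 2) * (pad1 v 1)^2) := by
  have step : v ⬝ᵥ (matS (M+1) h d).mulVec v =
      ∑ i ∈ range (M+1), ∑ j ∈ range (M+1),
        pad1 v (i+1) * gS (M+1) h d i j * pad1 v (j+1) := by
    rw [← Fin.sum_univ_eq_sum_range
      (fun i => ∑ j ∈ range (M+1), pad1 v (i+1) * gS (M+1) h d i j * pad1 v (j+1)) (M+1)]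
    simp only [dotProduct, mulVec]
    refine Finset.sum_congr rfl fun i _ => ?_
    rw [← Fin.sum_univ_eq_sum_range
      (fun j => pad1 v (↑i+1) * gS (M+1) h d ↑i j * pad1 v (j+1)) (M+1), Finset.mul_sum]
    refine Finset.sum_congr rfl fun j _ => ?_
    rw [pad1_succ v i.val i.isLt, pad1_succ v j.val j.isLt, matS_entry]
    ring
  have hF : ∀ i j, (i + 2 ≤ j ∨ j + 2 ≤ i) →
      pad1 v (i+1) * gS (M+1) h d i j * pad1 v (j+1) = 0 := by
    intro i j hij
    have : gS (M+1) h d i j = 0 := by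
      unfold gS
      rw [if_neg (by omega), if_neg (by omega), if_neg (by omega)]
    simp [this]
  rw [step, tri_sum (M+1) _ hF]
  simp only [Nat.add_sub_cancel]
  have diag : ∑ i ∈ range (M+1), pad1 v (i+1) * gS (M+1) h d i i * pad1 v (i+1)
      = (∑ i ∈ range M, ((d (i+1) + d (i+2)) + (d (i+2) + d (i+3))) * (pad1 v (i+1))^2) / (2*h)
        + ((d (M+1) + d (M+2)) * (pad1 v (M+1))^2) / (2*h) := by
    rw [Finset.sum_range_succ]
    congr 1
    · rw [Finset.sum_div]
      refine Finset.sum_congr rfl fun i hi => ?_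
      rw [Finset.mem_range] at hi
      unfold gS
      rw [if_pos rfl, if_neg (by omega)]
      ring
    · unfold gS
      rw [if_pos rfl, if_pos rfl]
      ring
  have off1 : ∑ i ∈ range M, pad1 v (i+1) * gS (M+1) h d i (i+1) * pad1 v (i+1+1)
      = -((∑ i ∈ range M, (d (i+2) + d (i+3)) * pad1 v (i+1) * pad1 v (i+2)) / (2*h)) := by
    rw [Finset.sum_div, ← Finset.sum_neg_distrib]
    refine Finset.sum_congr rfl fun i _ => ?_
    unfold gS
    rw [if_neg (by omega), if_pos rfl]
    ring
  have off2 : ∑ i ∈ range M, pad1 v (i+1+1) * gS (M+1) h d (i+1) i * pad1 v (i+1)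
      = -((∑ i ∈ range M, (d (i+2) + d (i+3)) * pad1 v (i+1) * pad1 v (i+2)) / (2*h)) := by
    rw [Finset.sum_div, ← Finset.sum_neg_distrib]
    refine Finset.sum_congr rfl fun i _ => ?_
    unfold gS
    rw [if_neg (by omega), if_neg (by omega), if_pos rfl]
    ring
  have rhsIcc : ∑ i ∈ Icc 2 (M+1), (d i + d (i+1)) * (pad1 v i - pad1 v (i-1))^2
      = ∑ k ∈ range M, (d (k+2) + d (k+3)) * (pad1 v (k+2) - pad1 v (k+1))^2 := by
    rw [← Finset.Ico_add_one_right_eq_Icc, Finset.sum_Ico_eq_sum_range]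
    refine Finset.sum_congr (congrArg range (by omega)) fun k _ => ?_
    have e1 : 2 + k = k + 2 := by omega
    have e2 : 2 + k + 1 = k + 3 := by omega
    have e3 : 2 + k - 1 = k + 1 := by omega
    rw [e3, e2, e1]
  have hkey := key1 M (fun k => d (k+2) + d (k+3)) (fun k => d (k+1) + d (k+2))
    (fun k => pad1 v (k+1)) (fun k => rfl)
  rw [diag, off1, off2, rhsIcc, hkey]
  ring

lemma lemA (M : ℕ) (d : ℕ → ℝ) (v : Fin (M+1) → ℝ) :
    v ⬝ᵥ (matA (M+1) d).mulVec v =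
      (1/4) * ((∑ i ∈ Icc 1 M, (d i - d (i+2)) * (pad1 v i)^2)
        + (d (M+1) + d (M+2)) * (pad1 v (M+1))^2) := by
  have step : v ⬝ᵥ (matA (M+1) d).mulVec v =
      ∑ i ∈ range (M+1), ∑ j ∈ range (M+1),
        pad1 v (i+1) * gA (M+1) d i j * pad1 v (j+1) := by
    rw [← Fin.sum_univ_eq_sum_range
      (fun i => ∑ j ∈ range (M+1), pad1 v (i+1) * gA (M+1) d i j * pad1 v (j+1)) (M+1)]
    simp only [dotProduct, mulVec]
    refine Finset.sum_congr rfl fun i _ => ?_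
    rw [← Fin.sum_univ_eq_sum_range
      (fun j => pad1 v (↑i+1) * gA (M+1) d ↑i j * pad1 v (j+1)) (M+1), Finset.mul_sum]
    refine Finset.sum_congr rfl fun j _ => ?_
    rw [pad1_succ v i.val i.isLt, pad1_succ v j.val j.isLt, matA_entry]
    ring
  have hF : ∀ i j, (i + 2 ≤ j ∨ j + 2 ≤ i) →
      pad1 v (i+1) * gA (M+1) d i j * pad1 v (j+1) = 0 := by
    intro i j hij
    have : gA (M+1) d i j = 0 := by
      unfold gA
      rw [if_neg (by omega), if_neg (by omega), if_neg (by omega)]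
    simp [this]
  rw [step, tri_sum (M+1) _ hF]
  simp only [Nat.add_sub_cancel]
  have diag : ∑ i ∈ range (M+1), pad1 v (i+1) * gA (M+1) d i i * pad1 v (i+1)
      = (∑ i ∈ range M, (d (i+1) - d (i+3)) * (pad1 v (i+1))^2) / 4
        + ((d (M+1) + d (M+2)) * (pad1 v (M+1))^2) / 4 := by
    rw [Finset.sum_range_succ]
    congr 1
    · rw [Finset.sum_div]
      refine Finset.sum_congr rfl fun i hi => ?_
      rw [Finset.mem_range] at hi
      unfold gA
      rw [if_pos rfl, if_neg (by omega)]
      ring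
    · unfold gA
      rw [if_pos rfl, if_pos rfl]
      ring
  have hoff : (∑ i ∈ range M, pad1 v (i+1) * gA (M+1) d i (i+1) * pad1 v (i+1+1))
      + ∑ i ∈ range M, pad1 v (i+1+1) * gA (M+1) d (i+1) i * pad1 v (i+1) = 0 := by
    rw [← Finset.sum_add_distrib]
    apply Finset.sum_eq_zero
    intro i _
    unfold gA
    rw [if_neg (by omega), if_pos rfl, if_neg (by omega), if_neg (by omega), if_pos rfl]
    ring
  have rhsIcc : ∑ i ∈ Icc 1 M, (d i - d (i+2)) * (pad1 v i)^2
      = ∑ k ∈ range M, (d (k+1) - d (k+3)) * (pad1 v (k+1))^2 := by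
    rw [← Finset.Ico_add_one_right_eq_Icc, Finset.sum_Ico_eq_sum_range]
    refine Finset.sum_congr (congrArg range (by omega)) fun k _ => ?_
    have e1 : 1 + k = k + 1 := by omega
    have e2 : 1 + k + 2 = k + 3 := by omega
    rw [e2, e1]
  rw [diag, rhsIcc]
  linarith [hoff]

theorem stmt_12 (m : ℕ) (hm : 1 ≤ m) (h zF Ma : ℝ) (hh : 0 < h) (hzF : 0 < zF)
    (hMa : 0 < Ma) (D : Fin (m + 1) → ℝ) :
    ∀ v : Fin m → ℝ,
      v ⬝ᵥ ((1 / zF) • matS m h (pad1 D) - Ma • matA m (pad1 D)).mulVec v =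
        (1 / (2 * h * zF)) *
            ((∑ i ∈ Finset.Icc 2 m,
                (pad1 D i + pad1 D (i + 1)) * (pad1 v i - pad1 v (i - 1)) ^ 2)
              + (pad1 D 1 + pad1 D 2) * (pad1 v 1) ^ 2)
          - (Ma / 4) *
            ((∑ i ∈ Finset.Icc 1 (m - 1),
                (pad1 D i - pad1 D (i + 2)) * (pad1 v i) ^ 2)
              + (pad1 D m + pad1 D (m + 1)) * (pad1 v m) ^ 2) := by
  intro v
  obtain ⟨M, rfl⟩ : ∃ M, m = M + 1 := ⟨m - 1, by omega⟩
  rw [Matrix.sub_mulVec, dotProduct_sub, Matrix.smul_mulVec, Matrix.smul_mulVec,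
    dotProduct_smul, dotProduct_smul, smul_eq_mul, smul_eq_mul, lemS, lemA]
  simp only [Nat.add_sub_cancel]
  ring
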